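/- Let Φ = {φ₁, φ₂} with φ₁(x) = x/2, φ₂(x) = x/2 + 1/2 (attractor [0,1]). Fix a word J = (j₁,…,j_m) ∈ {1,2}^m and define Ψ(I) = 2^{-|I|} if I does not begin with J, and Ψ(I) = 2^{-|I|}|I|^{-2} if I begins with J. Then ∑_{I begins with J} Ψ(I) < ∞ while ∑_{n=1}^∞ ∑_{I ∈ {1,2}^n} Ψ(I) = ∞, and the set W(Ψ,0) ∩ φ_J([0,1]) has Lebesgue measure zero. -/

import Mathlib

open MeasureTheory Set

/-- The IFS of Example 2: `φ₁(x) = x/2`, `φ₂(x) = x/2 + 1/2` (attractor `[0,1]`). -/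
noncomputable def phiB : Fin 2 → ℝ → ℝ := fun i x => if i = 0 then x / 2 else x / 2 + 1 / 2

/-- `φ_I = φ_{i₁} ∘ ⋯ ∘ φ_{i_n}`. -/
noncomputable def wordApplyB : List (Fin 2) → ℝ → ℝ :=
  fun I => I.foldr (fun i g => phiB i ∘ g) id

/-- `Ψ(I) = 2^{-|I|}` if `I` does not begin with `J`, and `Ψ(I) = 2^{-|I|}·|I|^{-2}`
if `I` begins with `J`. -/
noncomputable def PsiB (J I : List (Fin 2)) : ℝ :=
  if J <+: I then 2 ^ (-(I.length : ℝ)) * ((I.length : ℝ)⁻¹) ^ 2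
  else 2 ^ (-(I.length : ℝ))

lemma wordApplyB_nil (x : ℝ) : wordApplyB [] x = x := rfl

lemma wordApplyB_cons (i : Fin 2) (I : List (Fin 2)) (x : ℝ) :
    wordApplyB (i :: I) x = phiB i (wordApplyB I x) := rfl

lemma phiB_eq (i : Fin 2) (x : ℝ) :
    phiB i x = x / 2 + (if i = 0 then 0 else 1 / 2) := by
  unfold phiB; split <;> ring

lemma epsB_mem (i : Fin 2) :
    (0:ℝ) ≤ (if i = 0 then 0 else 1 / 2 : ℝ) ∧ (if i = 0 then (0:ℝ) else 1 / 2) ≤ 1 / 2 := by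
  split <;> norm_num

lemma pow_half_succ (n : ℕ) : (1:ℝ) / 2 ^ (n + 1) = (1 / 2 ^ n) / 2 := by
  rw [pow_succ]; ring

lemma wordApplyB_affine (I : List (Fin 2)) (x : ℝ) :
    wordApplyB I x = x / 2 ^ I.length + wordApplyB I 0 := by
  induction I with
  | nil => simp [wordApplyB_nil]
  | cons i I ih =>
    simp only [wordApplyB_cons, phiB_eq, ih, List.length_cons, pow_succ]
    ring

lemma wordApplyB_zero_mem (I : List (Fin 2)) :
    0 ≤ wordApplyB I 0 ∧ wordApplyB I 0 + 1 / 2 ^ I.length ≤ 1 := by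
  induction I with
  | nil => norm_num [wordApplyB_nil]
  | cons i I ih =>
    obtain ⟨h0, h1⟩ := ih
    obtain ⟨he0, he1⟩ := epsB_mem i
    have e := pow_half_succ I.length
    simp only [wordApplyB_cons, phiB_eq, List.length_cons, e]
    constructor <;> linarith

lemma wordApplyB_append (J K : List (Fin 2)) (x : ℝ) :
    wordApplyB (J ++ K) x = wordApplyB J (wordApplyB K x) := by
  induction J with
  | nil => rfl
  | cons i J ih => simp [wordApplyB_cons, List.cons_append, ih]

lemma wordApplyB_mem_Icc (I : List (Fin 2)) {x : ℝ} (hx : x ∈ Icc (0:ℝ) 1) :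
    wordApplyB I x ∈ Icc (wordApplyB I 0) (wordApplyB I 0 + 1 / 2 ^ I.length) := by
  rw [Set.mem_Icc, wordApplyB_affine I x]
  have h2 : (0:ℝ) < 2 ^ I.length := by positivity
  obtain ⟨h0, h1⟩ := hx
  constructor
  · have : 0 ≤ x / 2 ^ I.length := by positivity
    linarith
  · have : x / 2 ^ I.length ≤ 1 / 2 ^ I.length := by gcongr
    linarith

lemma wordApplyB_sep : ∀ (I K : List (Fin 2)), I.length = K.length → I ≠ K →
    1 / 2 ^ I.length ≤ |wordApplyB I 0 - wordApplyB K 0| := by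
  intro I
  induction I with
  | nil => intro K hl hne; exact absurd (List.length_eq_zero_iff.mp hl.symm).symm hne
  | cons i I ih =>
    intro K hl hne
    match K with
    | [] => simp at hl
    | k :: K =>
      simp only [List.length_cons, add_left_inj] at hl
      have hpos : (0:ℝ) < 1 / 2 ^ I.length := by positivity
      have e := pow_half_succ I.length
      obtain ⟨hbI0, hbI1⟩ := wordApplyB_zero_mem I
      obtain ⟨hbK0, hbK1⟩ := wordApplyB_zero_mem K
      rw [← hl] at hbK1
      simp only [wordApplyB_cons, phiB_eq, List.length_cons, e]
      set a := wordApplyB I 0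
      set b := wordApplyB K 0
      set e1 : ℝ := (if i = 0 then 0 else 1 / 2) with he1
      set e2 : ℝ := (if k = 0 then 0 else 1 / 2) with he2
      by_cases hik : i = k
      · have hne' : I ≠ K := by rintro rfl; exact hne (by rw [hik])
        have hsep := ih K hl hne'
        have h12 : e1 = e2 := by rw [he1, he2, hik]
        clear_value e1 e2
        rw [show a / 2 + e1 - (b / 2 + e2) = (a - b) / 2 + (e1 - e2) by ring, h12,
          sub_self, add_zero, abs_div, abs_two]
        linarith
      · have hd : |e1 - e2| = 1 / 2 := by
          rw [he1, he2]
          by_cases hi : i = 0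
          · have hk : ¬ k = 0 := fun h => hik (by rw [hi, h])
            rw [if_pos hi, if_neg hk]; norm_num
          · have hk : k = 0 := by omega
            rw [if_neg hi, if_pos hk]; norm_num
        clear_value e1 e2
        have hab : |(a - b) / 2| ≤ (1 - 1 / 2 ^ I.length) / 2 := by
          have h := abs_le.mpr ⟨show -(1 - 1 / 2 ^ I.length) ≤ a - b by linarith,
            show a - b ≤ 1 - 1 / 2 ^ I.length by linarith⟩
          rw [abs_div, abs_two]
          linarith
        have tri : |e1 - e2| - |(a - b) / 2| ≤ |(e1 - e2) + (a - b) / 2| := by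
          have h := abs_add_le ((e1 - e2) + (a - b) / 2) (-((a - b) / 2))
          simp only [add_neg_cancel_right, abs_neg] at h
          linarith
        rw [show a / 2 + e1 - (b / 2 + e2) = (e1 - e2) + (a - b) / 2 by ring]
        linarith

lemma psiB_nonneg (J I : List (Fin 2)) : 0 ≤ PsiB J I := by
  unfold PsiB; split <;> positivity

lemma psiB_rpow_eq (n : ℕ) : (2:ℝ) ^ (-(n:ℝ)) = (1/2 : ℝ) ^ n := by
  rw [Real.rpow_neg (by norm_num), Real.rpow_natCast]
  simp [one_div, inv_pow]

lemma sep_of_not_prefix (m : ℕ) (J I : List (Fin 2)) (hJ : J.length = m)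
    (hlen : m ≤ I.length) (hnp : ¬ J <+: I) (x : ℝ)
    (hx : wordApplyB J 0 < x) (hx' : x < wordApplyB J 0 + 1 / 2 ^ m) :
    min (x - wordApplyB J 0) (wordApplyB J 0 + 1 / 2 ^ m - x) ≤ |x - wordApplyB I 0| := by
  set I' := I.take m with hI'
  have hlen' : I'.length = m := by
    rw [hI', List.length_take]; omega
  have hne : I' ≠ J := by
    intro h
    exact hnp (List.prefix_iff_eq_take.mpr (by rw [hJ, ← h, hI']))
  obtain ⟨K, hK⟩ := List.take_prefix m I
  have hcI : wordApplyB I 0 ∈ Icc (wordApplyB I' 0) (wordApplyB I' 0 + 1 / 2 ^ m) := by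
    have hK0 := wordApplyB_zero_mem K
    have hKmem : wordApplyB K 0 ∈ Icc (0:ℝ) 1 := by
      constructor
      · exact hK0.1
      · have : (0:ℝ) < 1 / 2 ^ K.length := by positivity
        linarith [hK0.2]
    have h2 := wordApplyB_mem_Icc I' hKmem
    rw [hlen'] at h2
    have h3 : wordApplyB I 0 = wordApplyB I' (wordApplyB K 0) := by
      rw [← wordApplyB_append, hI', hK]
    rw [h3]
    exact h2
  have hsep : 1 / 2 ^ m ≤ |wordApplyB I' 0 - wordApplyB J 0| := by
    have := wordApplyB_sep I' J (by rw [hlen', hJ]) hne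
    rwa [hlen'] at this
  obtain ⟨hcI1, hcI2⟩ := hcI
  rcases le_abs.mp hsep with h | h
  · -- c I' - c J ≥ 1/2^m, so c I ≥ c J + 1/2^m > x
    have h1 : wordApplyB I 0 - x ≤ |x - wordApplyB I 0| := by
      rw [abs_sub_comm]; exact le_abs_self _
    have := min_le_right (x - wordApplyB J 0) (wordApplyB J 0 + 1 / 2 ^ m - x)
    linarith
  · -- c J - c I' ≥ 1/2^m, so c I ≤ c J < x
    have h1 : x - wordApplyB I 0 ≤ |x - wordApplyB I 0| := le_abs_self _
    have := min_le_left (x - wordApplyB J 0) (wordApplyB J 0 + 1 / 2 ^ m - x)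
    linarith

lemma part3 (m : ℕ) (hm : 0 < m) (J : List (Fin 2)) (hJ : J.length = m)
    (hsummable : Summable (fun I : {I : List (Fin 2) // J <+: I} => PsiB J I.1)) :
    volume ({x ∈ Set.Icc (0 : ℝ) 1 |
        {I : List (Fin 2) | |x - wordApplyB I 0| ≤ PsiB J I}.Infinite} ∩
      wordApplyB J '' Set.Icc (0 : ℝ) 1) = 0 := by
  set ι := {I : List (Fin 2) // J <+: I}
  set s : ι → Set ℝ := fun i => Metric.closedBall (wordApplyB i.1 0) (PsiB J i.1) with hs
  have hsum : ∑' i : ι, volume (s i) ≠ ⊤ := by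
    have hS : Summable (fun i : ι => 2 * PsiB J i.1) := hsummable.mul_left 2
    have hnn : ∀ i : ι, 0 ≤ 2 * PsiB J i.1 := fun i => by
      have := psiB_nonneg J i.1; linarith
    have : ∑' i : ι, volume (s i) = ENNReal.ofReal (∑' i : ι, 2 * PsiB J i.1) := by
      rw [ENNReal.ofReal_tsum_of_nonneg hnn hS]
      exact tsum_congr fun i => by rw [hs, Real.volume_closedBall]
    rw [this]
    exact ENNReal.ofReal_ne_top
  have hE : volume {x : ℝ | {i : ι | x ∈ s i}.Infinite} = 0 := by
    rw [← Filter.cofinite.limsup_set_eq (s := s)]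
    exact measure_limsup_cofinite_eq_zero hsum
  apply measure_mono_null ?_ (show volume ({wordApplyB J 0} ∪ ({wordApplyB J 0 + 1 / 2 ^ m} ∪
    {x : ℝ | {i : ι | x ∈ s i}.Infinite})) = 0 from ?_)
  · rintro x ⟨⟨hx01, hxinf⟩, y, hy, hyx⟩
    have hxab : x ∈ Icc (wordApplyB J 0) (wordApplyB J 0 + 1 / 2 ^ m) := by
      have := wordApplyB_mem_Icc J hy
      rw [hyx, hJ] at this
      exact this
    by_cases h1 : x = wordApplyB J 0
    · exact Or.inl h1
    by_cases h2 : x = wordApplyB J 0 + 1 / 2 ^ m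
    · exact Or.inr (Or.inl h2)
    refine Or.inr (Or.inr ?_)
    have hxlt : wordApplyB J 0 < x := lt_of_le_of_ne hxab.1 (Ne.symm h1)
    have hxlt' : x < wordApplyB J 0 + 1 / 2 ^ m := lt_of_le_of_ne hxab.2 h2
    set δ := min (x - wordApplyB J 0) (wordApplyB J 0 + 1 / 2 ^ m - x) with hδdef
    have hδ : 0 < δ := lt_min (by linarith) (by linarith)
    obtain ⟨N, hN⟩ := exists_pow_lt_of_lt_one hδ (by norm_num : (1:ℝ)/2 < 1)
    have hCfin := List.finite_length_le (Fin 2) (m + N)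
    have hsub : {I : List (Fin 2) | |x - wordApplyB I 0| ≤ PsiB J I} \
        {l : List (Fin 2) | l.length ≤ m + N} ⊆
        {I : List (Fin 2) | J <+: I ∧ |x - wordApplyB I 0| ≤ PsiB J I} := by
      rintro I ⟨hIin, hIc⟩
      refine ⟨?_, hIin⟩
      by_contra hnp
      have hlenI : m + N < I.length := by
        simpa using hIc
      have hpsi : PsiB J I = (1/2 : ℝ) ^ I.length := by
        rw [PsiB, if_neg hnp, psiB_rpow_eq]
      have hsep := sep_of_not_prefix m J I hJ (by omega) hnp x hxlt hxlt'
      have hle : (1/2 : ℝ) ^ I.length ≤ (1/2 : ℝ) ^ N :=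
        pow_le_pow_of_le_one (by norm_num) (by norm_num) (by omega)
      have hxi : |x - wordApplyB I 0| ≤ PsiB J I := hIin
      rw [hpsi] at hxi
      have : δ ≤ (1/2:ℝ) ^ N := le_trans (le_trans hsep hxi) hle
      linarith
    have hBinf := (hxinf.diff hCfin).mono hsub
    have hpre := hBinf.preimage (f := (Subtype.val : ι → List (Fin 2))) ?_
    · refine hpre.mono ?_
      rintro i hi
      simp only [Set.mem_preimage, Set.mem_setOf_eq] at hi ⊢
      show x ∈ Metric.closedBall (wordApplyB i.1 0) (PsiB J i.1)
      rw [Metric.mem_closedBall, Real.dist_eq]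
      exact hi.2
    · intro I hI
      rw [Subtype.range_coe_subtype]
      exact hI.1
  · rw [measure_union_null_iff]
    refine ⟨Real.volume_singleton, ?_⟩
    rw [measure_union_null_iff]
    exact ⟨Real.volume_singleton, hE⟩

def prefEquiv (J : List (Fin 2)) : List (Fin 2) ≃ {I : List (Fin 2) // J <+: I} where
  toFun K := ⟨J ++ K, J.prefix_append K⟩
  invFun I := I.1.drop J.length
  left_inv K := by simp
  right_inv I := by
    obtain ⟨I, K, rfl⟩ := I
    simp

lemma part1 (m : ℕ) (J : List (Fin 2)) (hJ : J.length = m) :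
    Summable (fun I : {I : List (Fin 2) // J <+: I} => PsiB J I.1) := by
  rw [← (prefEquiv J).summable_iff]
  rw [← (List.equivSigmaTuple (α := Fin 2)).symm.summable_iff]
  set F : ℕ → ℝ := fun n => 2 ^ (-((m + n : ℕ) : ℝ)) * (((m + n : ℕ) : ℝ)⁻¹) ^ 2 with hF
  have hfun : ∀ s : (Σ n, Fin n → Fin 2),
      (((fun I : {I : List (Fin 2) // J <+: I} => PsiB J I.1) ∘ (prefEquiv J)) ∘
        (List.equivSigmaTuple (α := Fin 2)).symm) s = F s.1 := by
    rintro ⟨n, v⟩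
    simp only [Function.comp_apply, List.equivSigmaTuple, Equiv.coe_fn_symm_mk, prefEquiv,
      Equiv.coe_fn_mk, PsiB, if_pos (J.prefix_append _), hF, List.length_append,
      List.length_ofFn, hJ]
  rw [summable_congr hfun]
  apply (summable_sigma_of_nonneg ?_).mpr
  · constructor
    · intro n
      exact Summable.of_finite
    · have : ∀ n : ℕ, ∑' _ : Fin n → Fin 2, F n = 2 ^ (-(m:ℝ)) * (((m + n : ℕ) : ℝ)⁻¹) ^ 2 := by
        intro n
        rw [tsum_fintype, Finset.sum_const, Finset.card_univ]
        have hcard : Fintype.card (Fin n → Fin 2) = 2 ^ n := by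
          simp [Fintype.card_fun]
        rw [hcard, nsmul_eq_mul, hF]
        push_cast
        rw [show ((2:ℝ) ^ n : ℝ) = (2:ℝ) ^ (n : ℝ) by rw [Real.rpow_natCast],
          ← mul_assoc, ← Real.rpow_add two_pos]
        ring_nf
      rw [summable_congr this]
      apply Summable.mul_left
      have base : Summable (fun n : ℕ => ((n:ℝ)⁻¹) ^ 2) := by
        have := Real.summable_one_div_nat_pow.mpr (one_lt_two)
        simpa [one_div, inv_pow] using this
      have := (summable_nat_add_iff m).mpr base
      apply this.congr
      intro n
      push_cast
      ring
  · rintro ⟨n, v⟩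
    rw [hF]
    positivity

lemma part2 (m : ℕ) (hm : 0 < m) (J : List (Fin 2)) (hJ : J.length = m) :
    ¬ Summable (fun n : ℕ => ∑ I : Fin n → Fin 2, PsiB J (List.ofFn I)) := by
  obtain ⟨j, J', rfl⟩ : ∃ j J', J = j :: J' := by
    cases J with
    | nil => simp at hJ; omega
    | cons j J' => exact ⟨j, J', rfl⟩
  set b : Fin 2 := if j = 0 then 1 else 0 with hb
  have hbj : b ≠ j := by
    rw [hb]; split <;> simp_all <;> omega
  have hpsi_nonneg : ∀ I : List (Fin 2), 0 ≤ PsiB (j :: J') I := by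
    intro I; unfold PsiB; split <;> positivity
  have key : ∀ n : ℕ, (1:ℝ) / 2 ≤ ∑ I : Fin (n+1) → Fin 2, PsiB (j :: J') (List.ofFn I) := by
    intro n
    have he : ∑ I : Fin (n+1) → Fin 2, PsiB (j :: J') (List.ofFn I) =
        ∑ p : Fin 2 × (Fin n → Fin 2), PsiB (j :: J') (List.ofFn (Fin.cons p.1 p.2)) := by
      apply Fintype.sum_equiv (Fin.consEquiv (fun _ => Fin 2)).symm
      intro I
      congr 1
      simp [Fin.consEquiv]
    rw [he, Fintype.sum_prod_type]
    have hterm : ∀ v : Fin n → Fin 2,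
        PsiB (j :: J') (List.ofFn (Fin.cons b v)) = 2 ^ (-((n:ℝ)+1)) := by
      intro v
      have hofn : List.ofFn (Fin.cons b v) = b :: List.ofFn v := by
        rw [List.ofFn_succ]
        simp
      have hnp : ¬ (j :: J') <+: (b :: List.ofFn v) := by
        rw [List.cons_prefix_cons]
        rintro ⟨h, -⟩
        exact hbj h.symm
      rw [hofn]
      simp only [PsiB, if_neg hnp, List.length_cons, List.length_ofFn]
      congr 1
      push_cast
      ring
    have hinner : ∑ v : Fin n → Fin 2, PsiB (j :: J') (List.ofFn (Fin.cons b v)) = 1/2 := by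
      rw [Finset.sum_congr rfl (fun v _ => hterm v), Finset.sum_const, Finset.card_univ]
      have hcard : Fintype.card (Fin n → Fin 2) = 2 ^ n := by simp [Fintype.card_fun]
      rw [hcard, nsmul_eq_mul]
      push_cast
      rw [show ((2:ℝ) ^ n : ℝ) = (2:ℝ) ^ (n : ℝ) by rw [Real.rpow_natCast],
        ← Real.rpow_add two_pos]
      rw [show (n:ℝ) + -((n:ℝ)+1) = -1 by ring]
      rw [Real.rpow_neg_one]
      norm_num
    calc (1:ℝ)/2 = ∑ v : Fin n → Fin 2, PsiB (j :: J') (List.ofFn (Fin.cons b v)) :=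
          hinner.symm
      _ ≤ _ := by
          apply Finset.single_le_sum (f := fun a : Fin 2 =>
            ∑ v : Fin n → Fin 2, PsiB (j :: J') (List.ofFn (Fin.cons a v)))
            (fun a _ => Finset.sum_nonneg fun v _ => hpsi_nonneg _) (Finset.mem_univ b)
  intro h
  have h0 := h.tendsto_atTop_zero
  have : (1:ℝ)/2 ≤ 0 := by
    apply ge_of_tendsto h0
    filter_upwards [Filter.eventually_ge_atTop 1] with n hn
    obtain ⟨k, rfl⟩ := Nat.exists_eq_succ_of_ne_zero (by omega : n ≠ 0)
    exact key k
  linarith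

/-- `∑_{I begins with J} Ψ(I) < ∞` while `∑_n ∑_{I ∈ {1,2}^n} Ψ(I) = ∞`,
and `W(Ψ,0) ∩ φ_J([0,1])` has Lebesgue measure zero. -/
theorem stmt_8 (m : ℕ) (hm : 0 < m) (J : List (Fin 2)) (hJ : J.length = m) :
    Summable (fun I : {I : List (Fin 2) // J <+: I} => PsiB J I.1) ∧
    ¬ Summable (fun n : ℕ => ∑ I : Fin n → Fin 2, PsiB J (List.ofFn I)) ∧
    volume ({x ∈ Set.Icc (0 : ℝ) 1 |
        {I : List (Fin 2) | |x - wordApplyB I 0| ≤ PsiB J I}.Infinite} ∩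
      wordApplyB J '' Set.Icc (0 : ℝ) 1) = 0 := by
  exact ⟨part1 m J hJ, part2 m hm J hJ, part3 m hm J hJ (part1 m J hJ)⟩
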